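/- Fix 0 < γ ≤ γ* < 1. Consider the optimization problem: maximize ∑_{t=1}^∞ (γ*)^{t-1} d_t over sequences (d_t) with d_t ∈ [−1,1] subject to ∑_{t=1}^∞ γ^{t-1} d_t ≤ 0 (all sums absolutely convergent). Then in any optimal solution the constraint ∑_{t=1}^∞ γ^{t-1} d_t ≤ 0 holds with equality. -/

import Mathlib

/-- Lemma 6: in any optimal solution of the impatient-agent linear program,
the discounted constraint `∑ γ^{t-1} d_t ≤ 0` is tight. Here `d t` is the
difference at time `t+1`. -/
theorem impatient_lp_constraint_tight (γ γstar : ℝ) (hγ0 : 0 < γ)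
    (hγ : γ ≤ γstar) (hγstar : γstar < 1) (d : ℕ → ℝ)
    (hd : ∀ t, d t ∈ Set.Icc (-1 : ℝ) 1)
    (hfeas : (∑' t : ℕ, γ ^ t * d t) ≤ 0)
    (hopt : ∀ d' : ℕ → ℝ, (∀ t, d' t ∈ Set.Icc (-1 : ℝ) 1) →
      (∑' t : ℕ, γ ^ t * d' t) ≤ 0 →
      (∑' t : ℕ, γstar ^ t * d' t) ≤ ∑' t : ℕ, γstar ^ t * d t) :
    (∑' t : ℕ, γ ^ t * d t) = 0 := by
  by_contra hne
  have hγ1 : γ < 1 := lt_of_le_of_lt hγ hγstar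
  have hγs0 : 0 < γstar := lt_of_lt_of_le hγ0 hγ
  -- summability of the relevant series
  have hsum : ∀ (δ : ℝ) (hδ0 : 0 < δ) (hδ1 : δ < 1) (f : ℕ → ℝ)
      (hf : ∀ t, f t ∈ Set.Icc (-1 : ℝ) 1), Summable (fun t : ℕ => δ ^ t * f t) := by
    intro δ hδ0 hδ1 f hf
    apply Summable.of_norm_bounded (summable_geometric_of_lt_one hδ0.le hδ1)
    intro t
    rw [norm_mul, norm_pow, Real.norm_of_nonneg hδ0.le]
    have h1 := (hf t).1
    have h2 := (hf t).2
    have : ‖f t‖ ≤ 1 := by rw [Real.norm_eq_abs, abs_le]; exact ⟨h1, h2⟩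
    nlinarith [pow_pos hδ0 t]
  have hS : Summable (fun t : ℕ => γ ^ t * d t) := hsum γ hγ0 hγ1 d hd
  have hSlt : (∑' t : ℕ, γ ^ t * d t) < 0 := lt_of_le_of_ne hfeas hne
  set S := ∑' t : ℕ, γ ^ t * d t with hSdef
  -- there exists t0 with a negative term, hence d t0 < 1
  have hex : ∃ t0, γ ^ t0 * d t0 < 0 := by
    by_contra h
    push_neg at h
    exact absurd (tsum_nonneg h) (not_le.mpr hSlt)
  obtain ⟨t0, ht0⟩ := hex
  have hdt0 : d t0 < 0 := by
    by_contra h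
    push_neg at h
    nlinarith [pow_pos hγ0 t0]
  set ε : ℝ := min (1 - d t0) (-S / γ ^ t0) with hεdef
  have hγt0 : (0:ℝ) < γ ^ t0 := pow_pos hγ0 t0
  have hε0 : 0 < ε := by
    apply lt_min
    · linarith
    · exact div_pos (by linarith) hγt0
  have hε1 : ε ≤ 1 - d t0 := min_le_left _ _
  have hε2 : ε ≤ -S / γ ^ t0 := min_le_right _ _
  set d' : ℕ → ℝ := fun t => d t + (if t = t0 then ε else 0) with hd'def
  have hd' : ∀ t, d' t ∈ Set.Icc (-1 : ℝ) 1 := by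
    intro t
    simp only [hd'def]
    split_ifs with h
    · subst h
      exact ⟨by linarith [(hd t).1], by linarith⟩
    · simpa using hd t
  -- decompose the tsum for d'
  have hdec : ∀ (δ : ℝ), 0 < δ → δ < 1 →
      (∑' t : ℕ, δ ^ t * d' t) = (∑' t : ℕ, δ ^ t * d t) + δ ^ t0 * ε := by
    intro δ hδ0 hδ1
    have h1 : Summable (fun t : ℕ => δ ^ t * d t) := hsum δ hδ0 hδ1 d hd
    have h2 : Summable (fun t : ℕ => if t = t0 then δ ^ t0 * ε else 0) :=
      summable_of_ne_finset_zero (s := {t0}) (by intro t ht; simp at ht; simp [ht])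
    have heq : (fun t : ℕ => δ ^ t * d' t)
        = fun t => δ ^ t * d t + (if t = t0 then δ ^ t0 * ε else 0) := by
      funext t
      by_cases h : t = t0 <;> simp [hd'def, h, mul_add]
    rw [heq, Summable.tsum_add h1 h2, tsum_ite_eq]
  have hfeas' : (∑' t : ℕ, γ ^ t * d' t) ≤ 0 := by
    rw [hdec γ hγ0 hγ1]
    have : ε * γ ^ t0 ≤ -S := by
      rwa [le_div_iff₀ hγt0] at hε2
    nlinarith
  have := hopt d' hd' hfeas'
  rw [hdec γstar hγs0 hγstar] at this
  nlinarith [pow_pos hγs0 t0, this]
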